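/- For every integer M ≥ 0, the sum over all Dyck words w of semilength 2M of the height of w after its first 2M steps equals binom(2M, M)^2 − catalan(2M), where catalan(n) = (1/(n+1))·binom(2n, n). -/

import Mathlib

open Finset

private def pS {n : ℕ} (ε : Fin n → ℤ) (k : ℕ) : ℤ :=
  ∑ i ∈ Finset.univ.filter (fun i : Fin n => (i : ℕ) < k), ε i

private lemma pS_ite {n : ℕ} (ε : Fin n → ℤ) (k : ℕ) :
    pS ε k = ∑ i : Fin n, if (i : ℕ) < k then ε i else 0 := by
  rw [pS, Finset.sum_filter]

private lemma pS_zero {n : ℕ} (ε : Fin n → ℤ) : pS ε 0 = 0 := by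
  rw [pS_ite]; simp

private lemma pS_all {n : ℕ} (ε : Fin n → ℤ) {k : ℕ} (hk : n ≤ k) : pS ε k = ∑ i, ε i := by
  rw [pS]
  congr 1
  rw [Finset.filter_true_of_mem]
  intro i _
  exact lt_of_lt_of_le i.isLt hk

private lemma pS_castSucc {n : ℕ} (ε : Fin (n+1) → ℤ) {k : ℕ} (hk : k ≤ n) :
    pS ε k = pS (ε ∘ Fin.castSucc) k := by
  rw [pS_ite, pS_ite, Fin.sum_univ_castSucc (fun i => if (i:ℕ) < k then ε i else 0)]
  have : ¬ ((Fin.last n : Fin (n+1)) : ℕ) < k := by simp [Fin.last]; omega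
  rw [if_neg this, add_zero]
  apply Finset.sum_congr rfl
  intro i _
  simp [Fin.coe_castSucc]

private lemma sum_castSucc {n : ℕ} (ε : Fin (n+1) → ℤ) :
    ∑ i, ε i = (∑ i, (ε ∘ Fin.castSucc) i) + ε (Fin.last n) :=
  Fin.sum_univ_castSucc ε

private lemma pS_succ_peel {n : ℕ} (ε : Fin (n+1) → ℤ) (k : ℕ) :
    pS ε (k+1) = ε 0 + pS (ε ∘ Fin.succ) k := by
  rw [pS_ite, pS_ite, Fin.sum_univ_succ (fun i => if (i:ℕ) < k+1 then ε i else 0)]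
  simp only [Fin.val_zero, Nat.zero_lt_succ, if_pos]
  congr 1
  apply Finset.sum_congr rfl
  intro i _
  simp only [Function.comp_apply, Fin.val_succ]
  congr 1
  simp [Nat.succ_lt_succ_iff]

private lemma sum_succ_peel {n : ℕ} (ε : Fin (n+1) → ℤ) :
    ∑ i, ε i = ε 0 + ∑ i, (ε ∘ Fin.succ) i :=
  Fin.sum_univ_succ ε

private def lo (n : ℕ) : Finset (Fin n → ℤ) := Fintype.piFinset fun _ => ({1,-1} : Finset ℤ)

private lemma mem_lo {n : ℕ} {ε : Fin n → ℤ} : ε ∈ lo n ↔ ∀ i, ε i = 1 ∨ ε i = -1 := by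
  simp [lo, Fintype.mem_piFinset]

private def AS (n h : ℕ) : Finset (Fin n → ℤ) :=
  (lo n).filter (fun ε => (∀ k ≤ n, 0 ≤ pS ε k) ∧ (∑ i, ε i) = (h:ℤ))

private def BS (n h : ℕ) : Finset (Fin n → ℤ) :=
  (lo n).filter (fun ε => (∀ k ≤ n, 0 ≤ (h:ℤ) + pS ε k) ∧ (h:ℤ) + (∑ i, ε i) = 0)

private lemma restr_mem_lo {n : ℕ} {ε : Fin (n+1) → ℤ} (hε : ε ∈ lo (n+1)) :
    (ε ∘ Fin.castSucc) ∈ lo n := by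
  rw [mem_lo] at hε ⊢
  intro i; exact hε _

private lemma restr2_mem_lo {n : ℕ} {ε : Fin (n+1) → ℤ} (hε : ε ∈ lo (n+1)) :
    (ε ∘ Fin.succ) ∈ lo n := by
  rw [mem_lo] at hε ⊢
  intro i; exact hε _

private lemma snoc_mem_lo {n : ℕ} {δ : Fin n → ℤ} (hδ : δ ∈ lo n) {z : ℤ}
    (hz : z = 1 ∨ z = -1) : (Fin.snoc δ z : Fin (n+1) → ℤ) ∈ lo (n+1) := by
  rw [mem_lo] at hδ ⊢
  intro i
  refine Fin.lastCases ?_ ?_ i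
  · simpa using hz
  · intro j; simpa using hδ j

private lemma cons_mem_lo {n : ℕ} {δ : Fin n → ℤ} (hδ : δ ∈ lo n) {z : ℤ}
    (hz : z = 1 ∨ z = -1) : (Fin.cons z δ : Fin (n+1) → ℤ) ∈ lo (n+1) := by
  rw [mem_lo] at hδ ⊢
  intro i
  refine Fin.cases ?_ ?_ i
  · simpa using hz
  · intro j; simpa using hδ j

private lemma snoc_comp_castSucc {n : ℕ} (δ : Fin n → ℤ) (z : ℤ) :
    (Fin.snoc δ z : Fin (n+1) → ℤ) ∘ Fin.castSucc = δ := by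
  funext i; simp

private lemma cons_comp_succ {n : ℕ} (δ : Fin n → ℤ) (z : ℤ) :
    (Fin.cons z δ : Fin (n+1) → ℤ) ∘ Fin.succ = δ := by
  funext i; simp

private lemma snoc_restr {n : ℕ} (ε : Fin (n+1) → ℤ) :
    (Fin.snoc (ε ∘ Fin.castSucc) (ε (Fin.last n)) : Fin (n+1) → ℤ) = ε := by
  funext i
  refine Fin.lastCases ?_ ?_ i <;> simp

private lemma cons_restr {n : ℕ} (ε : Fin (n+1) → ℤ) :
    (Fin.cons (ε 0) (ε ∘ Fin.succ) : Fin (n+1) → ℤ) = ε := by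
  funext i
  refine Fin.cases ?_ ?_ i <;> simp

-- AS recurrences
private lemma AS_card_zero (h : ℕ) : (AS 0 h).card = if h = 0 then 1 else 0 := by
  rcases Nat.eq_zero_or_pos h with rfl | hh
  · rw [if_pos rfl, Finset.card_eq_one]
    refine ⟨fun i => i.elim0, ?_⟩
    rw [Finset.eq_singleton_iff_unique_mem]
    constructor
    · rw [AS, Finset.mem_filter, mem_lo]
      refine ⟨fun i => i.elim0, fun k _ => ?_, by simp⟩
      simp [pS]
    · intro x _
      funext i; exact i.elim0
  · rw [if_neg (by omega), Finset.card_eq_zero, Finset.eq_empty_iff_forall_notMem]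
    intro ε hε
    simp only [AS, Finset.mem_filter] at hε
    have : (0:ℤ) = (h:ℤ) := by simpa using hε.2.2
    omega

private lemma AS_card_rec0 (n : ℕ) : (AS (n+1) 0).card = (AS n 1).card := by
  classical
  have hpos : ((AS (n+1) 0).filter (fun ε => ε (Fin.last n) = 1)) = ∅ := by
    rw [Finset.eq_empty_iff_forall_notMem]
    intro ε hε
    simp only [AS, Finset.mem_filter] at hε
    obtain ⟨⟨hlo, hpre, hsum⟩, hlast⟩ := hε
    have h1 : pS ε n = pS (ε ∘ Fin.castSucc) n := pS_castSucc ε le_rfl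
    have h2 : pS (ε ∘ Fin.castSucc) n = ∑ i, (ε ∘ Fin.castSucc) i := pS_all _ le_rfl
    have h3 := sum_castSucc ε
    have h4 := hpre n (by omega)
    rw [h1, h2] at h4
    rw [hsum, hlast] at h3
    push_cast at h3
    omega
  have split := Finset.card_filter_add_card_filter_not
    (s := AS (n+1) 0) (p := fun ε => ε (Fin.last n) = 1)
  rw [hpos] at split
  simp only [Finset.card_empty, Nat.zero_add] at split
  rw [← split]
  clear split hpos
  apply Finset.card_nbij' (fun ε => ε ∘ Fin.castSucc) (fun δ => Fin.snoc δ (-1))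
  · intro ε hε
    simp only [AS, Finset.mem_coe, Finset.mem_filter] at hε
    obtain ⟨⟨hlo, hpre, hsum⟩, hlast⟩ := hε
    have hlast' : ε (Fin.last n) = -1 := by
      rcases (mem_lo.mp hlo) (Fin.last n) with h | h
      · exact absurd h hlast
      · exact h
    simp only [AS, Finset.mem_coe, Finset.mem_filter]
    refine ⟨restr_mem_lo hlo, fun k hk => ?_, ?_⟩
    · rw [← pS_castSucc ε hk]
      exact hpre k (by omega)
    · have h3 := sum_castSucc ε
      rw [hsum, hlast'] at h3
      push_cast
      omega
  · intro δ hδ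
    simp only [AS, Finset.mem_coe, Finset.mem_filter] at hδ
    obtain ⟨hlo, hpre, hsum⟩ := hδ
    simp only [AS, Finset.mem_coe, Finset.mem_filter]
    have hs : ∑ i, (Fin.snoc δ (-1) : Fin (n+1) → ℤ) i = 0 := by
      rw [sum_castSucc, snoc_comp_castSucc]
      simp [hsum]
    refine ⟨⟨snoc_mem_lo hlo (Or.inr rfl), fun k hk => ?_, by simpa using hs⟩, ?_⟩
    · rcases Nat.lt_or_ge k (n+1) with hk' | hk'
      · rw [pS_castSucc _ (by omega : k ≤ n), snoc_comp_castSucc]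
        exact hpre k (by omega)
      · rw [pS_all _ hk', hs]
    · simp
  · intro ε hε
    simp only [AS, Finset.mem_coe, Finset.mem_filter] at hε
    obtain ⟨⟨hlo, _, hsum⟩, hlast⟩ := hε
    have hlast' : ε (Fin.last n) = -1 := by
      rcases (mem_lo.mp hlo) (Fin.last n) with h | h
      · exact absurd h hlast
      · exact h
    rw [← hlast']
    exact snoc_restr ε
  · intro δ _
    exact snoc_comp_castSucc δ (-1)

private lemma AS_filter_last {n h : ℕ} (z : ℤ) (hz : z = 1 ∨ z = -1) (g : ℕ)
    (hg : (h:ℤ) = (g:ℤ) + z) :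
    ((AS (n+1) h).filter (fun ε => ε (Fin.last n) = z)).card = (AS n g).card := by
  apply Finset.card_nbij' (fun ε => ε ∘ Fin.castSucc) (fun δ => Fin.snoc δ z)
  · intro ε hε
    simp only [AS, Finset.mem_coe, Finset.mem_filter] at hε
    obtain ⟨⟨hlo, hpre, hsum⟩, hlast⟩ := hε
    simp only [AS, Finset.mem_coe, Finset.mem_filter]
    refine ⟨restr_mem_lo hlo, fun k hk => ?_, ?_⟩
    · rw [← pS_castSucc ε hk]
      exact hpre k (by omega)
    · have h3 := sum_castSucc ε
      rw [hsum, hlast] at h3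
      omega
  · intro δ hδ
    simp only [AS, Finset.mem_coe, Finset.mem_filter] at hδ
    obtain ⟨hlo, hpre, hsum⟩ := hδ
    simp only [AS, Finset.mem_coe, Finset.mem_filter]
    have hs : ∑ i, (Fin.snoc δ z : Fin (n+1) → ℤ) i = (h:ℤ) := by
      rw [sum_castSucc, snoc_comp_castSucc]
      simp only [Fin.snoc_last]
      omega
    refine ⟨⟨snoc_mem_lo hlo hz, fun k hk => ?_, hs⟩, ?_⟩
    · rcases Nat.lt_or_ge k (n+1) with hk' | hk'
      · rw [pS_castSucc _ (by omega : k ≤ n), snoc_comp_castSucc]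
        exact hpre k (by omega)
      · rw [pS_all _ hk', hs]
        positivity
    · simp
  · intro ε hε
    simp only [AS, Finset.mem_coe, Finset.mem_filter] at hε
    rw [← hε.2]
    exact snoc_restr ε
  · intro δ _
    exact snoc_comp_castSucc δ z

private lemma AS_card_rec (n h : ℕ) :
    (AS (n+1) (h+1)).card = (AS n h).card + (AS n (h+2)).card := by
  classical
  have c1 : ((AS (n+1) (h+1)).filter (fun ε => ε (Fin.last n) = 1)).card = (AS n h).card :=
    AS_filter_last 1 (Or.inl rfl) h (by push_cast; ring)
  have c2' : ((AS (n+1) (h+1)).filter (fun ε => ε (Fin.last n) = -1)).card = (AS n (h+2)).card :=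
    AS_filter_last (-1) (Or.inr rfl) (h+2) (by push_cast; ring)
  have c2 : ((AS (n+1) (h+1)).filter (fun ε => ¬ ε (Fin.last n) = 1)).card
      = ((AS (n+1) (h+1)).filter (fun ε => ε (Fin.last n) = -1)).card := by
    congr 1
    apply Finset.filter_congr
    intro ε hε
    simp only [AS, Finset.mem_coe, Finset.mem_filter] at hε
    rcases mem_lo.mp hε.1 (Fin.last n) with hl | hl <;> simp [hl]
  have split := Finset.card_filter_add_card_filter_not
    (s := AS (n+1) (h+1)) (p := fun ε => ε (Fin.last n) = 1)
  rw [c1, c2, c2'] at split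
  exact split.symm

-- BS lemmas
private lemma BS_card_zero (h : ℕ) : (BS 0 h).card = if h = 0 then 1 else 0 := by
  rcases Nat.eq_zero_or_pos h with rfl | hh
  · rw [if_pos rfl, Finset.card_eq_one]
    refine ⟨fun i => i.elim0, ?_⟩
    rw [Finset.eq_singleton_iff_unique_mem]
    constructor
    · simp only [BS, Finset.mem_coe, Finset.mem_filter]
      refine ⟨mem_lo.mpr (fun i => i.elim0), fun k _ => ?_, by simp⟩
      simp [pS]
    · intro x _
      funext i; exact i.elim0
  · rw [if_neg (by omega), Finset.card_eq_zero, Finset.eq_empty_iff_forall_notMem]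
    intro ε hε
    simp only [BS, Finset.mem_coe, Finset.mem_filter] at hε
    have : (h:ℤ) + 0 = 0 := by simpa using hε.2.2
    omega

private lemma BS_filter_first {n h : ℕ} (z : ℤ) (hz : z = 1 ∨ z = -1) (g : ℕ)
    (hg : (g:ℤ) = (h:ℤ) + z) :
    ((BS (n+1) h).filter (fun ε => ε 0 = z)).card = (BS n g).card := by
  apply Finset.card_nbij' (fun ε => ε ∘ Fin.succ) (fun δ => Fin.cons z δ)
  · intro ε hε
    simp only [BS, Finset.mem_coe, Finset.mem_filter] at hε
    obtain ⟨⟨hlo, hpre, hsum⟩, hfirst⟩ := hε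
    simp only [BS, Finset.mem_coe, Finset.mem_filter]
    refine ⟨restr2_mem_lo hlo, fun k hk => ?_, ?_⟩
    · have := hpre (k+1) (by omega)
      rw [pS_succ_peel, hfirst] at this
      omega
    · rw [sum_succ_peel, hfirst] at hsum
      omega
  · intro δ hδ
    simp only [BS, Finset.mem_coe, Finset.mem_filter] at hδ
    obtain ⟨hlo, hpre, hsum⟩ := hδ
    simp only [BS, Finset.mem_coe, Finset.mem_filter]
    have hc0 : (Fin.cons z δ : Fin (n+1) → ℤ) 0 = z := by simp
    refine ⟨⟨cons_mem_lo hlo hz, fun k hk => ?_, ?_⟩, hc0⟩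
    · rcases k with _ | j
      · rw [pS_zero]
        positivity
      · rw [pS_succ_peel, hc0, cons_comp_succ]
        have := hpre j (by omega)
        omega
    · rw [sum_succ_peel, hc0, cons_comp_succ]
      omega
  · intro ε hε
    simp only [BS, Finset.mem_coe, Finset.mem_filter] at hε
    rw [← hε.2]
    exact cons_restr ε
  · intro δ _
    exact cons_comp_succ δ z

private lemma BS_card_rec (n h : ℕ) :
    (BS (n+1) (h+1)).card = (BS n h).card + (BS n (h+2)).card := by
  classical
  have c1 : ((BS (n+1) (h+1)).filter (fun ε => ε 0 = -1)).card = (BS n h).card :=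
    BS_filter_first (-1) (Or.inr rfl) h (by push_cast; ring)
  have c2' : ((BS (n+1) (h+1)).filter (fun ε => ε 0 = 1)).card = (BS n (h+2)).card :=
    BS_filter_first 1 (Or.inl rfl) (h+2) (by push_cast; ring)
  have c2 : ((BS (n+1) (h+1)).filter (fun ε => ¬ ε 0 = 1)).card
      = ((BS (n+1) (h+1)).filter (fun ε => ε 0 = -1)).card := by
    congr 1
    apply Finset.filter_congr
    intro ε hε
    simp only [BS, Finset.mem_filter] at hε
    rcases mem_lo.mp hε.1 0 with hl | hl <;> simp [hl]
  have split := Finset.card_filter_add_card_filter_not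
    (s := BS (n+1) (h+1)) (p := fun ε => ε 0 = 1)
  rw [c2', c2, c1] at split
  exact (split.symm.trans (Nat.add_comm _ _))

private lemma BS_card_rec0 (n : ℕ) : (BS (n+1) 0).card = (BS n 1).card := by
  classical
  have hneg : ((BS (n+1) 0).filter (fun ε => ¬ ε 0 = 1)) = ∅ := by
    rw [Finset.eq_empty_iff_forall_notMem]
    intro ε hε
    simp only [BS, Finset.mem_filter] at hε
    obtain ⟨⟨hlo, hpre, hsum⟩, hfirst⟩ := hε
    have hl : ε 0 = -1 := by
      rcases mem_lo.mp hlo 0 with hl | hl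
      · exact absurd hl hfirst
      · exact hl
    have := hpre 1 (by omega)
    rw [pS_succ_peel, hl, pS_zero] at this
    omega
  have c1 : ((BS (n+1) 0).filter (fun ε => ε 0 = 1)).card = (BS n 1).card :=
    BS_filter_first 1 (Or.inl rfl) 1 (by norm_num)
  have split := Finset.card_filter_add_card_filter_not
    (s := BS (n+1) 0) (p := fun ε => ε 0 = 1)
  rw [hneg, c1] at split
  simpa using split.symm

private lemma pS_castAdd {n₁ n₂ : ℕ} (ε : Fin (n₁+n₂) → ℤ) {k : ℕ} (hk : k ≤ n₁) :
    pS ε k = pS (ε ∘ Fin.castAdd n₂) k := by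
  rw [pS_ite, pS_ite, Fin.sum_univ_add (f := fun i => if (i:ℕ) < k then ε i else 0)]
  have h2 : ∀ r : Fin n₂, (if ((Fin.natAdd n₁ r : Fin (n₁+n₂)):ℕ) < k then ε (Fin.natAdd n₁ r) else 0) = 0 := by
    intro r
    rw [if_neg]
    simp only [Fin.coe_natAdd]
    omega
  rw [Finset.sum_congr rfl (fun r _ => h2 r), Finset.sum_const, smul_zero, add_zero]
  apply Finset.sum_congr rfl
  intro i _
  simp [Fin.coe_castAdd]

private lemma pS_natAdd {n₁ n₂ : ℕ} (ε : Fin (n₁+n₂) → ℤ) (k : ℕ) :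
    pS ε (n₁+k) = (∑ i, (ε ∘ Fin.castAdd n₂) i) + pS (ε ∘ Fin.natAdd n₁) k := by
  rw [pS_ite, pS_ite, Fin.sum_univ_add (f := fun i => if (i:ℕ) < n₁+k then ε i else 0)]
  congr 1
  · apply Finset.sum_congr rfl
    intro i _
    rw [if_pos]
    · rfl
    · simp only [Fin.coe_castAdd]
      omega
  · apply Finset.sum_congr rfl
    intro r _
    simp only [Fin.coe_natAdd, Function.comp_apply]
    congr 1
    simp only [eq_iff_iff]
    omega

private lemma sum_addSplit {n₁ n₂ : ℕ} (ε : Fin (n₁+n₂) → ℤ) :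
    ∑ i, ε i = (∑ i, (ε ∘ Fin.castAdd n₂) i) + (∑ i, (ε ∘ Fin.natAdd n₁) i) :=
  Fin.sum_univ_add ε

private lemma sum_bound {n : ℕ} {α : Fin n → ℤ} (hα : α ∈ lo n) : (∑ i, α i) ≤ (n:ℤ) := by
  calc ∑ i, α i ≤ ∑ _i : Fin n, (1:ℤ) := by
        apply Finset.sum_le_sum
        intro i _
        rcases mem_lo.mp hα i with h | h <;> omega
    _ = (n:ℤ) := by simp

private def TT (n₁ n₂ : ℕ) : Finset ((Fin n₁ → ℤ) × (Fin n₂ → ℤ)) :=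
  ((lo n₁) ×ˢ (lo n₂)).filter
    (fun p => (∀ k ≤ n₁, 0 ≤ pS p.1 k) ∧ (∀ k ≤ n₂, 0 ≤ (∑ i, p.1 i) + pS p.2 k)
      ∧ (∑ i, p.1 i) + (∑ i, p.2 i) = 0)

private lemma mem_TT {n₁ n₂ : ℕ} {p : (Fin n₁ → ℤ) × (Fin n₂ → ℤ)} :
    p ∈ TT n₁ n₂ ↔ (p.1 ∈ lo n₁ ∧ p.2 ∈ lo n₂)
      ∧ (∀ k ≤ n₁, 0 ≤ pS p.1 k) ∧ (∀ k ≤ n₂, 0 ≤ (∑ i, p.1 i) + pS p.2 k)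
      ∧ (∑ i, p.1 i) + (∑ i, p.2 i) = 0 := by
  rw [TT, Finset.mem_filter, Finset.mem_product]

private lemma split_sum (n₁ n₂ : ℕ) :
    (∑ ε ∈ (Fintype.piFinset fun _ : Fin (n₁+n₂) => ({1, -1} : Finset ℤ)).filter
        (fun ε : Fin (n₁+n₂) → ℤ =>
          (∀ k : ℕ, k ≤ n₁+n₂ → 0 ≤ pS ε k) ∧ (∑ i, ε i) = 0),
      pS ε n₁)
      = ∑ h ∈ range (n₁+1), (h:ℤ) * (AS n₁ h).card * (BS n₂ h).card := by
  classical
  have step1 : (∑ ε ∈ (Fintype.piFinset fun _ : Fin (n₁+n₂) => ({1, -1} : Finset ℤ)).filter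
        (fun ε : Fin (n₁+n₂) → ℤ =>
          (∀ k : ℕ, k ≤ n₁+n₂ → 0 ≤ pS ε k) ∧ (∑ i, ε i) = 0),
      pS ε n₁) = ∑ p ∈ TT n₁ n₂, (∑ i, p.1 i) := by
    apply Finset.sum_nbij' (i := fun ε => (ε ∘ Fin.castAdd n₂, ε ∘ Fin.natAdd n₁))
      (j := fun p => Fin.append p.1 p.2)
    · intro ε hε
      rw [Finset.mem_filter] at hε
      obtain ⟨hlo, hpre, hsum⟩ := hε
      rw [mem_TT]
      have hlo' : ε ∈ lo (n₁+n₂) := hlo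
      refine ⟨⟨mem_lo.mpr (fun i => mem_lo.mp hlo' _), mem_lo.mpr (fun i => mem_lo.mp hlo' _)⟩,
        fun k hk => ?_, fun k hk => ?_, ?_⟩
      · rw [← pS_castAdd ε hk]
        exact hpre k (by omega)
      · rw [← pS_natAdd ε k]
        exact hpre (n₁+k) (by omega)
      · rw [← sum_addSplit]
        exact hsum
    · intro p hp
      rw [mem_TT] at hp
      obtain ⟨⟨hlo1, hlo2⟩, hpre1, hpre2, hsum⟩ := hp
      rw [Finset.mem_filter]
      have hl : Fin.append p.1 p.2 ∈ lo (n₁+n₂) := by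
        rw [mem_lo]
        intro i
        refine Fin.addCases ?_ ?_ i
        · intro j; rw [Fin.append_left]; exact mem_lo.mp hlo1 j
        · intro j; rw [Fin.append_right]; exact mem_lo.mp hlo2 j
      have hc1 : (Fin.append p.1 p.2) ∘ Fin.castAdd n₂ = p.1 := by
        funext j; exact Fin.append_left p.1 p.2 j
      have hc2 : (Fin.append p.1 p.2) ∘ Fin.natAdd n₁ = p.2 := by
        funext j; exact Fin.append_right p.1 p.2 j
      refine ⟨hl, fun k hk => ?_, ?_⟩
      · rcases Nat.lt_or_ge k n₁ with hk' | hk'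
        · rw [pS_castAdd _ (le_of_lt hk'), hc1]
          exact hpre1 k (by omega)
        · obtain ⟨j, rfl⟩ : ∃ j, k = n₁ + j := ⟨k - n₁, by omega⟩
          rw [pS_natAdd, hc1, hc2]
          exact hpre2 j (by omega)
      · rw [sum_addSplit, hc1, hc2]
        exact hsum
    · intro ε _
      funext i
      refine Fin.addCases ?_ ?_ i
      · intro j; rw [Fin.append_left]; rfl
      · intro j; rw [Fin.append_right]; rfl
    · intro p _
      have hc1 : (Fin.append p.1 p.2) ∘ Fin.castAdd n₂ = p.1 := by
        funext j; exact Fin.append_left p.1 p.2 j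
      have hc2 : (Fin.append p.1 p.2) ∘ Fin.natAdd n₁ = p.2 := by
        funext j; exact Fin.append_right p.1 p.2 j
      rw [Prod.ext_iff]
      exact ⟨hc1, hc2⟩
    · intro ε hε
      rw [pS_castAdd ε (le_refl n₁), pS_all _ (le_refl n₁)]
  rw [step1]
  clear step1
  -- step 2: fiberwise by the value of the first-half sum
  have maps : ∀ p ∈ TT n₁ n₂, (∑ i, p.1 i).toNat ∈ range (n₁+1) := by
    intro p hp
    rw [mem_TT] at hp
    obtain ⟨⟨hlo1, _⟩, hpre1, _, _⟩ := hp
    have h0 : 0 ≤ ∑ i, p.1 i := by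
      have := hpre1 n₁ le_rfl
      rwa [pS_all _ le_rfl] at this
    have h1 := sum_bound hlo1
    rw [Finset.mem_range]
    omega
  rw [← Finset.sum_fiberwise_of_maps_to maps (fun p => (∑ i, p.1 i))]
  apply Finset.sum_congr rfl
  intro h _
  have fib : (TT n₁ n₂).filter (fun p => (∑ i, p.1 i).toNat = h) = (AS n₁ h) ×ˢ (BS n₂ h) := by
    ext p
    rw [Finset.mem_filter, mem_TT, Finset.mem_product]
    simp only [AS, BS, Finset.mem_filter]
    constructor
    · rintro ⟨⟨⟨hlo1, hlo2⟩, hpre1, hpre2, hsum⟩, hkey⟩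
      have h0 : 0 ≤ ∑ i, p.1 i := by
        have := hpre1 n₁ le_rfl
        rwa [pS_all _ le_rfl] at this
      have hs1 : (∑ i, p.1 i) = (h:ℤ) := by omega
      refine ⟨⟨hlo1, hpre1, hs1⟩, hlo2, fun k hk => ?_, ?_⟩
      · rw [← hs1]; exact hpre2 k hk
      · rw [← hs1]; exact hsum
    · rintro ⟨⟨hlo1, hpre1, hs1⟩, hlo2, hpre2, hsum⟩
      refine ⟨⟨⟨hlo1, hlo2⟩, hpre1, fun k hk => ?_, ?_⟩, ?_⟩
      · rw [hs1]; exact hpre2 k hk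
      · rw [hs1]; exact hsum
      · rw [hs1]; simp
  have const : ∀ p ∈ (TT n₁ n₂).filter (fun p => (∑ i, p.1 i).toNat = h), (∑ i, p.1 i) = (h:ℤ) := by
    intro p hp
    rw [Finset.mem_filter] at hp
    obtain ⟨hpT, hkey⟩ := hp
    rw [mem_TT] at hpT
    obtain ⟨⟨hlo1, _⟩, hpre1, _, _⟩ := hpT
    have h0 : 0 ≤ ∑ i, p.1 i := by
      have := hpre1 n₁ le_rfl
      rwa [pS_all _ le_rfl] at this
    omega
  rw [Finset.sum_congr rfl const, Finset.sum_const, fib, Finset.card_product]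
  ring


-- closed form
private def FZ (n h : ℕ) : ℤ :=
  if (n + h) % 2 = 0 then (n.choose ((n+h)/2) : ℤ) - (n.choose ((n+h)/2 + 1) : ℤ) else 0

private lemma FZ_zero (h : ℕ) : FZ 0 h = if h = 0 then 1 else 0 := by
  rcases Nat.eq_zero_or_pos h with rfl | hh
  · simp [FZ]
  rw [if_neg (by omega)]
  unfold FZ
  split
  · rename_i he
    have h1 : 1 ≤ (0+h)/2 := by omega
    rw [Nat.choose_eq_zero_of_lt (by omega), Nat.choose_eq_zero_of_lt (by omega)]
    simp
  · rfl

private lemma FZ_rec0 (n : ℕ) : FZ (n+1) 0 = FZ n 1 := by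
  unfold FZ
  rcases Nat.even_or_odd n with he | ho
  · obtain ⟨a, ha⟩ := he
    have c1 : ¬ (n+1+0) % 2 = 0 := by omega
    have c2 : ¬ (n+1) % 2 = 0 := by omega
    rw [if_neg c1, if_neg c2]
  · obtain ⟨a, ha⟩ := ho
    have c1 : (n+1+0) % 2 = 0 := by omega
    have c2 : (n+1) % 2 = 0 := by omega
    rw [if_pos c1, if_pos c2]
    simp only [show (n+1+0)/2 = a+1 by omega, show (n+1)/2 = a+1 by omega]
    have p1 : (n+1).choose (a+1) = n.choose a + n.choose (a+1) := by
      rw [show n+1 = n+1 from rfl]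
      exact Nat.choose_succ_succ n a
    have p2 : (n+1).choose (a+2) = n.choose (a+1) + n.choose (a+2) := Nat.choose_succ_succ n (a+1)
    have sym : n.choose a = n.choose (a+1) := by
      have := Nat.choose_symm (n := n) (k := a) (by omega)
      rw [show n - a = a+1 by omega] at this
      exact this.symm
    push_cast [p1, p2, sym]
    ring

private lemma FZ_rec (n h : ℕ) : FZ (n+1) (h+1) = FZ n h + FZ n (h+2) := by
  unfold FZ
  rcases Nat.even_or_odd (n+h) with he | ho
  · obtain ⟨b, hb⟩ := he
    have c1 : (n+1+(h+1)) % 2 = 0 := by omega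
    have c2 : (n+h) % 2 = 0 := by omega
    have c3 : (n+(h+2)) % 2 = 0 := by omega
    rw [if_pos c1, if_pos c2, if_pos c3]
    set a := (n+h)/2 with ha
    simp only [show (n+1+(h+1))/2 = a+1 by omega, show (n+(h+2))/2 = a+1 by omega]
    have p1 : (n+1).choose (a+1) = n.choose a + n.choose (a+1) := Nat.choose_succ_succ n a
    have p2 : (n+1).choose (a+2) = n.choose (a+1) + n.choose (a+2) := Nat.choose_succ_succ n (a+1)
    push_cast [p1, p2]
    ring
  · obtain ⟨b, hb⟩ := ho
    have c1 : ¬ (n+1+(h+1)) % 2 = 0 := by omega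
    have c2 : ¬ (n+h) % 2 = 0 := by omega
    have c3 : ¬ (n+(h+2)) % 2 = 0 := by omega
    rw [if_neg c1, if_neg c2, if_neg c3]
    ring


private def cc (M k : ℕ) : ℤ := ((2*M).choose (M+k) : ℤ)

private lemma cc_top (M : ℕ) {k : ℕ} (hk : M < k) : cc M k = 0 := by
  unfold cc
  rw [Nat.choose_eq_zero_of_lt (by omega)]
  simp

private lemma cc_ratio (M k : ℕ) : ((M:ℤ) - k) * cc M k = ((M:ℤ)+k+1) * cc M (k+1) := by
  rcases le_or_gt k M with h | h
  · have := Nat.choose_succ_right_eq (2*M) (M+k)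
    have h2 : 2*M - (M+k) = M - k := by omega
    rw [h2] at this
    unfold cc
    have : ((2*M).choose (M+k+1) * (M+k+1) : ℤ) = (2*M).choose (M+k) * (M-k : ℕ) := by
      exact_mod_cast congrArg (Nat.cast : ℕ → ℤ) this
    push_cast [Nat.cast_sub h] at this
    rw [show M + (k+1) = M + k + 1 by ring]
    linarith
  · rw [cc_top M h, cc_top M (by omega)]
    ring

-- pointwise identity
private lemma ptwise (M k : ℕ) :
    (2*(k:ℤ)+1) * (cc M k - cc M (k+1))^2
      = (4*k+1-2*M) * (cc M k)^2 + (4*k+3+2*M) * (cc M (k+1))^2 := by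
  have h := cc_ratio M k
  linear_combination (2*(cc M k + cc M (k+1))) * h

-- telescoping for E
private lemma Esum (M : ℕ) :
    ∑ k ∈ range (M+1), 8 * (k:ℤ) * (cc M k)^2 = 2 * M * (cc M 0)^2 := by
  rcases Nat.eq_zero_or_pos M with rfl | hM
  · simp
  obtain ⟨m, rfl⟩ : ∃ m, M = m + 1 := ⟨M-1, by omega⟩
  set b : ℕ → ℤ := fun j => ((2*m+1).choose (m+j) : ℤ) with hb
  have pascal : ∀ j : ℕ, cc (m+1) j = b j + b (j+1) := by
    intro j
    unfold cc
    rw [hb]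
    have : 2*(m+1) = (2*m+1)+1 := by ring
    rw [this, show m+1+j = (m+j)+1 by ring, Nat.choose_succ_succ]
    push_cast
    rw [show m+(j+1) = m+j+1 by ring]
  have habs : ∀ j : ℕ, ((m:ℤ)+1+j) * cc (m+1) j = (2*m+2) * b j := by
    intro j
    have := Nat.add_one_mul_choose_eq (2*m+1) (m+j)
    unfold cc
    rw [hb]
    have h2 : ((2*m+2 : ℕ) * (2*m+1).choose (m+j) : ℤ)
        = ((2*m+2).choose (m+j+1) : ℤ) * (m+j+1 : ℕ) := by exact_mod_cast congrArg (Nat.cast : ℕ → ℤ) this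
    push_cast at h2
    rw [show 2*(m+1) = 2*m+2 by ring, show m+1+j = m+j+1 by ring]
    linarith
  have hb01 : b 0 = b 1 := by
    rw [hb]
    simp only []
    have := Nat.choose_symm (n := 2*m+1) (k := m) (by omega)
    rw [show 2*m+1-m = m+1 by omega] at this
    exact_mod_cast (congrArg (Nat.cast : ℕ → ℤ) this).symm
  have key : ∀ j : ℕ, 8 * (j:ℤ) * (cc (m+1) j)^2
      = 8*(m+1) * ((b j)^2 - (b (j+1))^2) := by
    intro j
    have h1 := habs j
    have h2 := pascal j
    -- j * cc j = (m+1)(b j - b (j+1))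
    have : (j:ℤ) * cc (m+1) j = (m+1) * (b j - b (j+1)) := by linear_combination h1 - ((m:ℤ)+1) * h2
    calc 8 * (j:ℤ) * (cc (m+1) j)^2 = 8 * (((j:ℤ) * cc (m+1) j) * cc (m+1) j) := by ring
      _ = 8 * ((m+1) * (b j - b (j+1)) * (b j + b (j+1))) := by rw [this, h2]
      _ = 8*(m+1) * ((b j)^2 - (b (j+1))^2) := by ring
  rw [Finset.sum_congr rfl (fun j _ => key j)]
  rw [← Finset.mul_sum]
  have tel : ∑ j ∈ range (m+1+1), ((b j)^2 - (b (j+1))^2) = (b 0)^2 - (b (m+2))^2 :=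
    Finset.sum_range_sub' (fun j => (b j)^2) (m+2)
  rw [tel]
  have hbtop : b (m+2) = 0 := by
    rw [hb]
    simp only []
    rw [Nat.choose_eq_zero_of_lt (by omega)]
    simp
  have hc0 : cc (m+1) 0 = 2 * b 0 := by rw [pascal 0, hb01]; ring
  rw [hbtop, hc0]
  push_cast
  ring

-- weighted sum identity
private lemma weighted (M : ℕ) :
    ∑ k ∈ range (M+1), (2*(k:ℤ)+1) * (cc M k - cc M (k+1))^2 = (cc M 0)^2 := by
  have step : ∑ k ∈ range (M+1), (2*(k:ℤ)+1) * (cc M k - cc M (k+1))^2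
      = ∑ k ∈ range (M+1), ((4*(k:ℤ)+1-2*M) * (cc M k)^2 + (4*k+3+2*M) * (cc M (k+1))^2) :=
    Finset.sum_congr rfl (fun k _ => ptwise M k)
  rw [step, Finset.sum_add_distrib]
  have shift : ∑ k ∈ range (M+1), (4*(k:ℤ)+3+2*M) * (cc M (k+1))^2
      = ∑ k ∈ range (M+1), (4*(k:ℤ)-1+2*M) * (cc M k)^2 - (-1+2*M) * (cc M 0)^2 := by
    have h1 : ∑ k ∈ range (M+2), (4*(k:ℤ)-1+2*M) * (cc M k)^2
        = ∑ k ∈ range (M+1), (4*((k:ℤ)+1)-1+2*M) * (cc M (k+1))^2 + (4*(0:ℤ)-1+2*M) * (cc M 0)^2 := by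
      rw [Finset.sum_range_succ' (fun k => (4*(k:ℤ)-1+2*M) * (cc M k)^2) (M+1)]
      push_cast
      rfl
    have h2 : ∑ k ∈ range (M+2), (4*(k:ℤ)-1+2*M) * (cc M k)^2
        = ∑ k ∈ range (M+1), (4*(k:ℤ)-1+2*M) * (cc M k)^2 + (4*((M:ℤ)+1)-1+2*M) * (cc M (M+1))^2 := by
      rw [Finset.sum_range_succ]
      push_cast; rfl
    rw [cc_top M (by omega)] at h2
    have h3 : ∀ k:ℕ, (4*((k:ℤ)+1)-1+2*M) * (cc M (k+1))^2 = (4*(k:ℤ)+3+2*M) * (cc M (k+1))^2 := by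
      intro k; ring
    rw [Finset.sum_congr rfl (fun k _ => h3 k)] at h1
    linarith
  rw [shift]
  have comb : ∑ x ∈ range (M+1), (4*(x:ℤ)+1-2*M) * (cc M x)^2
      + ∑ x ∈ range (M+1), (4*(x:ℤ)-1+2*M) * (cc M x)^2
      = ∑ x ∈ range (M+1), 8 * (x:ℤ) * (cc M x)^2 := by
    rw [← Finset.sum_add_distrib]
    exact Finset.sum_congr rfl (fun k _ => by ring)
  have := Esum M
  linarith


-- Vandermonde 1
private lemma vand1 (M : ℕ) :
    ((4*M).choose (2*M) : ℤ) = ∑ i ∈ range (2*M+1), ((2*M).choose i : ℤ)^2 := by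
  have h := Nat.add_choose_eq (2*M) (2*M) (2*M)
  rw [Finset.Nat.sum_antidiagonal_eq_sum_range_succ_mk] at h
  have h2 : ∀ i ∈ range (2*M+1), (2*M).choose i * (2*M).choose (2*M - i) = ((2*M).choose i)^2 := by
    intro i hi
    rw [Finset.mem_range] at hi
    rw [Nat.choose_symm (by omega)]
    ring
  rw [Finset.sum_congr rfl h2] at h
  rw [show 4*M = 2*M+2*M by ring]
  exact_mod_cast congrArg (Nat.cast : ℕ → ℤ) h

-- Vandermonde 2
private lemma vand2 (M : ℕ) :
    ((4*M).choose (2*M+1) : ℤ) = ∑ i ∈ range (2*M+1), ((2*M).choose i : ℤ) * ((2*M).choose (i+1)) := by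
  have h := Nat.add_choose_eq (2*M) (2*M) (2*M+1)
  rw [Finset.Nat.sum_antidiagonal_eq_sum_range_succ_mk] at h
  rw [Finset.sum_range_succ' (fun i => (2*M).choose i * (2*M).choose (2*M+1-i)) (2*M+1)] at h
  have h0 : (2*M).choose (2*M+1-0) = 0 := Nat.choose_eq_zero_of_lt (by omega)
  rw [h0, Nat.mul_zero, add_zero] at h
  have h2 : ∀ i ∈ range (2*M+1), (2*M).choose (i+1) * (2*M).choose (2*M+1-(i+1))
      = (2*M).choose i * (2*M).choose (i+1) := by
    intro i hi
    rw [Finset.mem_range] at hi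
    rw [show 2*M+1-(i+1) = 2*M - i by omega, Nat.choose_symm (by omega)]
    ring
  rw [Finset.sum_congr rfl h2] at h
  rw [show 4*M = 2*M+2*M by ring]
  exact_mod_cast congrArg (Nat.cast : ℕ → ℤ) h

-- folding 1
private lemma fold1 (M : ℕ) :
    ∑ i ∈ range (2*M+1), ((2*M).choose i : ℤ)^2 = 2 * (∑ k ∈ range (M+1), (cc M k)^2) - (cc M 0)^2 := by
  have split : ∑ i ∈ range M, ((2*M).choose i : ℤ)^2 + ∑ i ∈ Ico M (2*M+1), ((2*M).choose i : ℤ)^2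
      = ∑ i ∈ range (2*M+1), ((2*M).choose i : ℤ)^2 := by
    rw [Finset.range_eq_Ico, Finset.range_eq_Ico]
    exact Finset.sum_Ico_consecutive _ (by omega : 0 ≤ M) (by omega : M ≤ 2*M+1)
  have right : ∑ i ∈ Ico M (2*M+1), ((2*M).choose i : ℤ)^2 = ∑ k ∈ range (M+1), (cc M k)^2 := by
    rw [Finset.sum_Ico_eq_sum_range]
    rw [show 2*M+1-M = M+1 by omega]
    rfl
  have left : ∑ i ∈ range M, ((2*M).choose i : ℤ)^2 = ∑ k ∈ range (M+1), (cc M k)^2 - (cc M 0)^2 := by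
    rw [← Finset.sum_range_reflect (fun i => ((2*M).choose i : ℤ)^2) M]
    have refl : ∀ j ∈ range M, ((2*M).choose (M-1-j) : ℤ)^2 = (cc M (j+1))^2 := by
      intro j hj
      rw [Finset.mem_range] at hj
      unfold cc
      rw [show (2*M).choose (M-1-j) = (2*M).choose (2*M - (M-1-j)) from (Nat.choose_symm (by omega)).symm]
      rw [show 2*M - (M-1-j) = M+(j+1) by omega]
    rw [Finset.sum_congr rfl refl]
    rw [Finset.sum_range_succ' (fun k => (cc M k)^2) M]
    ring
  linarith

-- folding 2
private lemma fold2 (M : ℕ) :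
    ∑ i ∈ range (2*M+1), ((2*M).choose i : ℤ) * ((2*M).choose (i+1))
      = 2 * (∑ k ∈ range (M+1), cc M k * cc M (k+1)) := by
  have split : ∑ i ∈ range M, ((2*M).choose i : ℤ) * ((2*M).choose (i+1))
      + ∑ i ∈ Ico M (2*M+1), ((2*M).choose i : ℤ) * ((2*M).choose (i+1))
      = ∑ i ∈ range (2*M+1), ((2*M).choose i : ℤ) * ((2*M).choose (i+1)) := by
    rw [Finset.range_eq_Ico, Finset.range_eq_Ico]
    exact Finset.sum_Ico_consecutive _ (by omega : 0 ≤ M) (by omega : M ≤ 2*M+1)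
  have right : ∑ i ∈ Ico M (2*M+1), ((2*M).choose i : ℤ) * ((2*M).choose (i+1))
      = ∑ k ∈ range (M+1), cc M k * cc M (k+1) := by
    rw [Finset.sum_Ico_eq_sum_range]
    rw [show 2*M+1-M = M+1 by omega]
    apply Finset.sum_congr rfl
    intro k _
    unfold cc
    rw [show M + k + 1 = M + (k+1) by ring]
  have left : ∑ i ∈ range M, ((2*M).choose i : ℤ) * ((2*M).choose (i+1))
      = ∑ k ∈ range (M+1), cc M k * cc M (k+1) := by
    rw [← Finset.sum_range_reflect (fun i => ((2*M).choose i : ℤ) * ((2*M).choose (i+1))) M]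
    have refl : ∀ j ∈ range M, ((2*M).choose (M-1-j) : ℤ) * ((2*M).choose (M-1-j+1))
        = cc M j * cc M (j+1) := by
      intro j hj
      rw [Finset.mem_range] at hj
      unfold cc
      rw [show (2*M).choose (M-1-j) = (2*M).choose (2*M - (M-1-j)) from (Nat.choose_symm (by omega)).symm]
      rw [show (2*M).choose (M-1-j+1) = (2*M).choose (2*M - (M-1-j+1)) from (Nat.choose_symm (by omega)).symm]
      rw [show 2*M - (M-1-j) = M+(j+1) by omega, show 2*M - (M-1-j+1) = M+j by omega]
      ring
    rw [Finset.sum_congr rfl refl]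
    rcases Nat.eq_zero_or_pos M with rfl | hM
    · simp [cc]
    rw [Finset.sum_range_succ (fun k => cc M k * cc M (k+1)) M]
    rw [cc_top M (show M < M+1 by omega)]
    ring
  linarith

-- unweighted
private lemma unweighted (M : ℕ) :
    ∑ k ∈ range (M+1), (cc M k - cc M (k+1))^2
      = ((4*M).choose (2*M) : ℤ) - ((4*M).choose (2*M+1) : ℤ) := by
  have expand : ∀ k ∈ range (M+1), (cc M k - cc M (k+1))^2
      = (cc M k)^2 + (cc M (k+1))^2 - 2 * (cc M k * cc M (k+1)) := fun k _ => by ring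
  rw [Finset.sum_congr rfl expand]
  have shift : ∑ k ∈ range (M+1), (cc M (k+1))^2 = ∑ k ∈ range (M+1), (cc M k)^2 - (cc M 0)^2 := by
    have h1 := Finset.sum_range_succ' (fun k => (cc M k)^2) (M+1)
    have h2 := Finset.sum_range_succ (fun k => (cc M k)^2) (M+1)
    rw [cc_top M (show M < M+1 by omega)] at h2
    have hz : ((0:ℤ))^2 = 0 := by ring
    rw [hz] at h2
    linarith
  rw [Finset.sum_sub_distrib, Finset.sum_add_distrib, shift]
  have v1 := vand1 M
  have v2 := vand2 M
  have f1 := fold1 M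
  have f2 := fold2 M
  have gsum : ∑ k ∈ range (M+1), 2 * (cc M k * cc M (k+1)) = 2 * ∑ k ∈ range (M+1), cc M k * cc M (k+1) := by
    rw [Finset.mul_sum]
  rw [gsum]
  linarith

-- A and B counts equal the closed form
private lemma AS_eq_FZ : ∀ n h : ℕ, ((AS n h).card : ℤ) = FZ n h := by
  intro n
  induction n with
  | zero =>
    intro h
    rw [AS_card_zero, FZ_zero]
    split <;> simp
  | succ n ih =>
    intro h
    cases h with
    | zero => rw [AS_card_rec0, FZ_rec0]; exact ih 1
    | succ h =>
      rw [AS_card_rec, FZ_rec]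
      push_cast
      rw [ih h, ih (h+2)]

private lemma BS_eq_FZ : ∀ n h : ℕ, ((BS n h).card : ℤ) = FZ n h := by
  intro n
  induction n with
  | zero =>
    intro h
    rw [BS_card_zero, FZ_zero]
    split <;> simp
  | succ n ih =>
    intro h
    cases h with
    | zero => rw [BS_card_rec0, FZ_rec0]; exact ih 1
    | succ h =>
      rw [BS_card_rec, FZ_rec]
      push_cast
      rw [ih h, ih (h+2)]

private lemma FZ_odd (M j : ℕ) : FZ (2*M) (2*j+1) = 0 := by
  rw [FZ, if_neg (by omega)]

private lemma FZ_even (M k : ℕ) : FZ (2*M) (2*k) = cc M k - cc M (k+1) := by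
  rw [FZ, if_pos (by omega)]
  rw [show (2*M+2*k)/2 = M + k by omega]
  rw [cc, cc, show M + (k+1) = M+k+1 by ring]

private lemma sum_even_vanish (g : ℕ → ℤ) (hg : ∀ j, g (2*j+1) = 0) :
    ∀ m : ℕ, ∑ h ∈ range (2*m+1), g h = ∑ k ∈ range (m+1), g (2*k) := by
  intro m
  induction m with
  | zero => simp
  | succ m ih =>
    rw [show 2*(m+1)+1 = ((2*m+1)+1)+1 by ring, Finset.sum_range_succ, Finset.sum_range_succ,
      ih, hg m, Finset.sum_range_succ (fun k => g (2*k)) (m+1)]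
    rw [show (2*m+1)+1 = 2*(m+1) by ring]
    ring

private lemma main_int (M : ℕ) :
    ∑ h ∈ range (2*M+1), (h:ℤ) * (AS (2*M) h).card * (BS (2*M) h).card
      = (cc M 0)^2 - (((4*M).choose (2*M) : ℤ) - ((4*M).choose (2*M+1) : ℤ)) := by
  have e1 : ∀ h ∈ range (2*M+1), (h:ℤ) * (AS (2*M) h).card * (BS (2*M) h).card
      = (h:ℤ) * FZ (2*M) h * FZ (2*M) h := by
    intro h _
    rw [AS_eq_FZ, BS_eq_FZ]
  rw [Finset.sum_congr rfl e1]
  rw [sum_even_vanish (fun h => (h:ℤ) * FZ (2*M) h * FZ (2*M) h)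
    (fun j => by simp only [FZ_odd]; ring) M]
  have e2 : ∀ k ∈ range (M+1), ((2*k:ℕ):ℤ) * FZ (2*M) (2*k) * FZ (2*M) (2*k)
      = (2*(k:ℤ)+1) * (cc M k - cc M (k+1))^2 - (cc M k - cc M (k+1))^2 := by
    intro k _
    rw [FZ_even]
    push_cast
    ring
  rw [Finset.sum_congr rfl e2, Finset.sum_sub_distrib, weighted, unweighted]

open Finset in
/-- The sum, over all Dyck words of semilength `2M` (encoded as `±1`-sequences of length `4M`
with total sum `0` and all partial sums nonnegative), of the height after the first `2M`
steps equals `binom(2M, M)^2 − catalan(2M)`, where `catalan(n) = (1/(n+1))·binom(2n, n)`. -/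
theorem dyck_middle_height_total_even (M : ℕ) :
    ((∑ ε ∈ (Fintype.piFinset fun _ : Fin (4 * M) => ({1, -1} : Finset ℤ)) |>.filter
          (fun ε : Fin (4 * M) → ℤ =>
            (∀ k : ℕ, k ≤ 4 * M →
              0 ≤ ∑ i ∈ Finset.univ.filter (fun i : Fin (4 * M) => (i : ℕ) < k), ε i) ∧
            (∑ i, ε i) = 0),
        ∑ i ∈ Finset.univ.filter (fun i : Fin (4 * M) => (i : ℕ) < 2 * M), ε i : ℤ) : ℚ) =
      (Nat.choose (2 * M) M : ℚ) ^ 2 -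
        (1 / ((2 * M : ℚ) + 1)) * (Nat.choose (2 * (2 * M)) (2 * M) : ℚ) := by
  rw [show (4*M) = 2*M+2*M from by ring]
  have key := split_sum (2*M) (2*M)
  simp only [pS] at key
  erw [key]; rw [main_int M]
  clear key
  have hcc : cc M 0 = ((2*M).choose M : ℤ) := by rw [cc, Nat.add_zero]
  rw [hcc, show 2*(2*M) = 4*M from by ring]
  have hrel : (4*M).choose (2*M+1) * (2*M+1) = (4*M).choose (2*M) * (2*M) := by
    have := Nat.choose_succ_right_eq (4*M) (2*M)
    rw [show 4*M - 2*M = 2*M by omega] at this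
    exact this
  have h21 : ((2*M:ℚ)+1) ≠ 0 := by positivity
  have hrelq : ((4*M).choose (2*M+1) : ℚ) * ((2*M:ℚ)+1) = ((4*M).choose (2*M) : ℚ) * (2*M) := by
    exact_mod_cast congrArg (Nat.cast : ℕ → ℚ) hrel
  push_cast
  field_simp
  ring_nf
  ring_nf at hrelq
  linarith
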